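/- Let θ > 0, η ≥ 0 with 2η < θ, and M an invertible linear map on ℝ^{n−1} with ‖M^{−1}‖ = 1/θ, and e ∈ ℝ^{n−1} with ‖e‖ = η. Then there exists p ∈ ℝ^{n−1} with ‖p‖ ≤ 2η/(θ + sqrt(θ² − 4η²)) satisfying M p = e − p (eᵀ p). -/

import Mathlib

open scoped RealInnerProductSpace

/-- Let `θ > 0`, `η ≥ 0` with `2η < θ`, `M` an invertible linear map on `ℝ^m` with
`‖M⁻¹‖ = 1/θ`, and `e` a vector with `‖e‖ = η`. Then there exists `p` with
`‖p‖ ≤ 2η/(θ + √(θ² − 4η²))` such that `M p = e − p (eᵀ p)`. -/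
theorem stmt_18 {m : ℕ} (θ η : ℝ) (hθ : 0 < θ) (hη : 0 ≤ η) (hηθ : 2 * η < θ)
    (M : EuclideanSpace ℝ (Fin m) ≃L[ℝ] EuclideanSpace ℝ (Fin m))
    (hM : ‖(M.symm : EuclideanSpace ℝ (Fin m) →L[ℝ] EuclideanSpace ℝ (Fin m))‖ = 1 / θ)
    (e : EuclideanSpace ℝ (Fin m)) (he : ‖e‖ = η) :
    ∃ p : EuclideanSpace ℝ (Fin m),
      ‖p‖ ≤ 2 * η / (θ + Real.sqrt (θ ^ 2 - 4 * η ^ 2)) ∧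
      M p = e - ⟪e, p⟫ • p := by
  let E := EuclideanSpace ℝ (Fin m)
  set s : ℝ := Real.sqrt (θ ^ 2 - 4 * η ^ 2) with hs_def
  have hs4 : 0 ≤ θ ^ 2 - 4 * η ^ 2 := by nlinarith
  have hs0 : 0 ≤ s := Real.sqrt_nonneg _
  have hs2 : s ^ 2 = θ ^ 2 - 4 * η ^ 2 := Real.sq_sqrt hs4
  have hden : 0 < θ + s := by linarith
  set r : ℝ := 2 * η / (θ + s) with hr_def
  have hr0 : 0 ≤ r := div_nonneg (by linarith) hden.le
  have hkey : η * (r ^ 2 + 1) = θ * r := by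
    rw [hr_def]
    field_simp
    linear_combination η * hs2
  have hrθ : r ≤ 2 * η / θ := by
    apply div_le_div_of_nonneg_left (by linarith) hθ (by linarith)
  -- the iteration map
  set f : E → E := fun p => M.symm (e - ⟪e, p⟫ • p) with hf_def
  have hMs : ∀ x : E, ‖M.symm x‖ ≤ (1 / θ) * ‖x‖ := by
    intro x
    calc ‖M.symm x‖ ≤ ‖(M.symm : E →L[ℝ] E)‖ * ‖x‖ :=
          (M.symm : E →L[ℝ] E).le_opNorm x
      _ = (1 / θ) * ‖x‖ := by rw [hM]
  -- maps to
  have hmaps : Set.MapsTo f (Metric.closedBall (0 : E) r) (Metric.closedBall (0 : E) r) := by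
    intro p hp
    rw [Metric.mem_closedBall, dist_zero_right] at hp ⊢
    have h1 : ‖f p‖ ≤ (1 / θ) * ‖e - ⟪e, p⟫ • p‖ := hMs _
    have h2 : ‖e - ⟪e, p⟫ • p‖ ≤ η + η * r ^ 2 := by
      calc ‖e - ⟪e, p⟫ • p‖ ≤ ‖e‖ + ‖⟪e, p⟫ • p‖ := norm_sub_le _ _
        _ = η + |⟪e, p⟫| * ‖p‖ := by rw [he, norm_smul, Real.norm_eq_abs]
        _ ≤ η + (‖e‖ * ‖p‖) * ‖p‖ := by
            gcongr
            exact abs_real_inner_le_norm e p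
        _ ≤ η + (η * r) * r := by
            rw [he]
            gcongr
        _ = η + η * r ^ 2 := by ring
    calc ‖f p‖ ≤ (1 / θ) * (η + η * r ^ 2) := le_trans h1 (by gcongr)
      _ = (1 / θ) * (θ * r) := by rw [← hkey]; ring_nf
      _ = r := by field_simp
  -- Lipschitz bound on the ball
  set K : NNReal := Real.toNNReal (4 * η ^ 2 / θ ^ 2) with hK_def
  have hKval : (K : ℝ) = 4 * η ^ 2 / θ ^ 2 := Real.coe_toNNReal _
    (div_nonneg (by positivity) (by positivity))
  have hK1 : K < 1 := by
    rw [← NNReal.coe_lt_coe, hKval, NNReal.coe_one]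
    rw [div_lt_one (by positivity)]
    nlinarith
  have hlip : LipschitzOnWith K f (Metric.closedBall (0 : E) r) := by
    apply LipschitzOnWith.of_dist_le_mul
    intro p hp q hq
    rw [Metric.mem_closedBall, dist_zero_right] at hp hq
    rw [dist_eq_norm, dist_eq_norm]
    have h1 : f p - f q = M.symm (⟪e, q⟫ • q - ⟪e, p⟫ • p) := by
      rw [hf_def]
      simp only
      rw [← map_sub]
      congr 1
      abel
    rw [h1]
    have h2 : ⟪e, q⟫ • q - ⟪e, p⟫ • p = ⟪e, q⟫ • (q - p) + ⟪e, q - p⟫ • p := by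
      rw [inner_sub_right]
      module
    have h3 : ‖⟪e, q⟫ • q - ⟪e, p⟫ • p‖ ≤ 2 * η * r * ‖p - q‖ := by
      rw [h2]
      have hqp : ‖q - p‖ = ‖p - q‖ := norm_sub_rev _ _
      calc ‖⟪e, q⟫ • (q - p) + ⟪e, q - p⟫ • p‖
          ≤ ‖⟪e, q⟫ • (q - p)‖ + ‖⟪e, q - p⟫ • p‖ := norm_add_le _ _
        _ = |⟪e, q⟫| * ‖q - p‖ + |⟪e, q - p⟫| * ‖p‖ := by
            rw [norm_smul, norm_smul, Real.norm_eq_abs, Real.norm_eq_abs]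
        _ ≤ (‖e‖ * ‖q‖) * ‖q - p‖ + (‖e‖ * ‖q - p‖) * ‖p‖ := by
            gcongr
            · exact abs_real_inner_le_norm _ _
            · exact abs_real_inner_le_norm _ _
        _ ≤ (η * r) * ‖p - q‖ + (η * ‖p - q‖) * r := by
            rw [he, hqp]
            gcongr
        _ = 2 * η * r * ‖p - q‖ := by ring
    calc ‖M.symm (⟪e, q⟫ • q - ⟪e, p⟫ • p)‖
        ≤ (1 / θ) * ‖⟪e, q⟫ • q - ⟪e, p⟫ • p‖ := hMs _
      _ ≤ (1 / θ) * (2 * η * r * ‖p - q‖) := by gcongr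
      _ ≤ (K : ℝ) * ‖p - q‖ := by
          rw [hKval]
          have : (1 / θ) * (2 * η * r) ≤ 4 * η ^ 2 / θ ^ 2 := by
            have : (1 / θ) * (2 * η * r) ≤ (1 / θ) * (2 * η * (2 * η / θ)) := by
              gcongr
            calc (1 / θ) * (2 * η * r) ≤ (1 / θ) * (2 * η * (2 * η / θ)) := this
              _ = 4 * η ^ 2 / θ ^ 2 := by field_simp; ring
          nlinarith [norm_nonneg (p - q)]
  have hcomplete : IsComplete (Metric.closedBall (0 : E) r) :=
    (Metric.isClosed_closedBall).isComplete
  have hcontr : ContractingWith K (hmaps.restrict f _ _) :=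
    ⟨hK1, hlip.mapsToRestrict hmaps⟩
  have h0 : (0 : E) ∈ Metric.closedBall (0 : E) r := by
    simpa using hr0
  obtain ⟨p, hps, hfix, -⟩ := hcontr.exists_fixedPoint' hcomplete hmaps h0
    (edist_ne_top _ _)
  refine ⟨p, ?_, ?_⟩
  · rw [Metric.mem_closedBall, dist_zero_right] at hps
    exact hps
  · have : M.symm (e - ⟪e, p⟫ • p) = p := hfix
    calc M p = M (M.symm (e - ⟪e, p⟫ • p)) := by rw [this]
      _ = e - ⟪e, p⟫ • p := M.apply_symm_apply _
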